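/- Let û : ℝ≥0 → ℂ⁶ solve the Fourier-transformed Model II system with m = 6 as above. Then ξ·∂ₜRe(i·û₁·conj(û₂)) + ξ²(|û₁|² − |û₂|²) + γ·ξ·Re(i·û₁·conj(û₂)) + ξ·Re(i·û₁·conj(û₃)) = 0 for all t ≥ 0. -/

import Mathlib

open Complex

/-- Dissipation identity (3.3) for the Fourier-transformed Model II system with m = 6. -/
theorem stmt15 (γ ξ a₄ a₅ a₆ : ℝ) (hγ : 0 < γ)
    (ha₄ : a₄ ≠ 0) (ha₅ : a₅ ≠ 0) (ha₆ : a₆ ≠ 0)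
    (u : ℝ → Fin 6 → ℂ)
    (hdiff : ∀ j : Fin 6, ∀ t : ℝ, 0 ≤ t → DifferentiableAt ℝ (fun s => u s j) t)
    (h1 : ∀ t : ℝ, 0 ≤ t →
      deriv (fun s => u s 0) t + I * (ξ : ℂ) * u t 1 = 0)
    (h2 : ∀ t : ℝ, 0 ≤ t →
      deriv (fun s => u s 1) t + I * (ξ : ℂ) * u t 0 + (γ : ℂ) * u t 1 + u t 2 = 0)
    (h3 : ∀ t : ℝ, 0 ≤ t →
      deriv (fun s => u s 2) t + I * (ξ : ℂ) * (a₄ : ℂ) * u t 3 - u t 1 = 0)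
    (h4 : ∀ t : ℝ, 0 ≤ t →
      deriv (fun s => u s 3) t + I * (ξ : ℂ) * (a₄ : ℂ) * u t 2 + (a₅ : ℂ) * u t 4 = 0)
    (h5 : ∀ t : ℝ, 0 ≤ t →
      deriv (fun s => u s 4) t + I * (ξ : ℂ) * (a₆ : ℂ) * u t 5 - (a₅ : ℂ) * u t 3 = 0)
    (h6 : ∀ t : ℝ, 0 ≤ t →
      deriv (fun s => u s 5) t + I * (ξ : ℂ) * (a₆ : ℂ) * u t 4 = 0) :
    ∀ t : ℝ, 0 ≤ t →
      ξ * deriv (fun s => (I * u s 0 * (starRingEnd ℂ) (u s 1)).re) t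
      + ξ^2 * (Complex.normSq (u t 0) - Complex.normSq (u t 1))
      + γ * ξ * (I * u t 0 * (starRingEnd ℂ) (u t 1)).re
      + ξ * (I * u t 0 * (starRingEnd ℂ) (u t 2)).re = 0 := by
  intro t ht
  have hd0 : HasDerivAt (fun s => u s 0) (-(I * (ξ:ℂ) * u t 1)) t := by
    have := (hdiff 0 t ht).hasDerivAt
    have h := h1 t ht
    have : deriv (fun s => u s 0) t = -(I * (ξ:ℂ) * u t 1) := by linear_combination h
    rw [← this]; exact (hdiff 0 t ht).hasDerivAt
  have hd1 : HasDerivAt (fun s => u s 1)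
      (-(I * (ξ:ℂ) * u t 0 + (γ:ℂ) * u t 1 + u t 2)) t := by
    have h := h2 t ht
    have : deriv (fun s => u s 1) t = -(I * (ξ:ℂ) * u t 0 + (γ:ℂ) * u t 1 + u t 2) := by
      linear_combination h
    rw [← this]; exact (hdiff 1 t ht).hasDerivAt
  have hconj : HasDerivAt (fun s => (starRingEnd ℂ) (u s 1))
      ((starRingEnd ℂ) (-(I * (ξ:ℂ) * u t 0 + (γ:ℂ) * u t 1 + u t 2))) t := by
    simpa [Function.comp_def] using (Complex.conjCLE.hasFDerivAt.comp_hasDerivAt t hd1)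
  have hprod : HasDerivAt (fun s => I * u s 0 * (starRingEnd ℂ) (u s 1))
      (I * (-(I * (ξ:ℂ) * u t 1)) * (starRingEnd ℂ) (u t 1)
        + I * u t 0 * (starRingEnd ℂ) (-(I * (ξ:ℂ) * u t 0 + (γ:ℂ) * u t 1 + u t 2))) t := by
    have := ((hd0.const_mul I).mul hconj)
    simpa [Pi.mul_def, mul_comm, mul_left_comm, mul_assoc] using this
  have hre : HasDerivAt (fun s => (I * u s 0 * (starRingEnd ℂ) (u s 1)).re)
      ((I * (-(I * (ξ:ℂ) * u t 1)) * (starRingEnd ℂ) (u t 1)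
        + I * u t 0 * (starRingEnd ℂ) (-(I * (ξ:ℂ) * u t 0 + (γ:ℂ) * u t 1 + u t 2))).re) t := by
    exact Complex.reCLM.hasFDerivAt.comp_hasDerivAt t hprod
  rw [hre.deriv]
  simp only [Complex.add_re, Complex.mul_re, Complex.mul_im, Complex.neg_re, Complex.neg_im,
    Complex.I_re, Complex.I_im, Complex.conj_re, Complex.conj_im, Complex.ofReal_re,
    Complex.ofReal_im, Complex.normSq_apply, Complex.add_im, map_add, map_neg, map_mul]
  ring
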